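/- Let (J_k)_{k≥0} be a nondecreasing real sequence with J_0 < J_* and J_k ≤ J_* for all k, let z < J_0, and let (V_k(s))_{k≥0} be reals satisfying V_{k+1}(s) ≥ V_k(s)·(J_{k+1} − z)/(J_k − z) + τ·(J_{k+1} − J_k)·(c − z)/(J_k − z) for constants τ ≥ 0 and c ≥ J_*, where V_0(s) ≤ 0. Then for all k, V_k(s) ≥ V_0(s)·(J_* − z)/(J_0 − z) − τ·(J_* − J_0)(c − z)(J_* − z)/(J_0 − z)^2. -/
import Mathlib


theorem telescoping_relative_value_bound
    (J : ℕ → ℝ) (Jstar z τ c : ℝ) (V : ℕ → ℝ)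
    (hmono : Monotone J) (h0star : J 0 < Jstar) (hle : ∀ k, J k ≤ Jstar)
    (hz : z < J 0) (hτ : 0 ≤ τ) (hc : Jstar ≤ c) (hV0 : V 0 ≤ 0)
    (hrec : ∀ k, V (k + 1) ≥ V k * (J (k + 1) - z) / (J k - z)
      - τ * (J (k + 1) - J k) * (c - z) / (J k - z)) :
    ∀ k, V k ≥ V 0 * (Jstar - z) / (J 0 - z)
      - τ * (Jstar - J 0) * (c - z) * (Jstar - z) / (J 0 - z) ^ 2 := by
  have hd0 : 0 < J 0 - z := by linarith
  have hdk : ∀ k, 0 < J k - z := fun k => by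
    have := hmono (Nat.zero_le k); linarith
  -- exact telescoped invariant
  have inv : ∀ k, V k ≥ V 0 * (J k - z) / (J 0 - z)
      - τ * (c - z) * (J k - J 0) / (J 0 - z) := by
    intro k
    induction k with
    | zero =>
      have : V 0 * (J 0 - z) / (J 0 - z) = V 0 := by
        field_simp
      rw [this]; simp
    | succ k ih =>
      have hdk1 := hdk (k + 1)
      have hdkk := hdk k
      have key : V 0 * (J (k+1) - z) / (J 0 - z) - τ * (c - z) * (J (k+1) - J 0) / (J 0 - z)
          = (V 0 * (J k - z) / (J 0 - z) - τ * (c - z) * (J k - J 0) / (J 0 - z))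
              * (J (k+1) - z) / (J k - z)
            - τ * (J (k+1) - J k) * (c - z) / (J k - z) := by
        field_simp
        ring
      rw [ge_iff_le, key]
      have h2 : (V 0 * (J k - z) / (J 0 - z) - τ * (c - z) * (J k - J 0) / (J 0 - z))
            * (J (k+1) - z) / (J k - z)
          ≤ V k * (J (k+1) - z) / (J k - z) := by
        apply div_le_div_of_nonneg_right _ hdkk.le
        exact mul_le_mul_of_nonneg_right ih hdk1.le
      have h3 := hrec k
      linarith
  intro k
  have h1 := inv k
  have hVk : V 0 * (Jstar - z) / (J 0 - z) ≤ V 0 * (J k - z) / (J 0 - z) := by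
    apply div_le_div_of_nonneg_right _ hd0.le
    nlinarith [hle k]
  have hterm : τ * (c - z) * (J k - J 0) / (J 0 - z)
      ≤ τ * (Jstar - J 0) * (c - z) * (Jstar - z) / (J 0 - z) ^ 2 := by
    rw [div_le_div_iff₀ hd0 (by positivity)]
    have h3 : J k ≤ Jstar := hle k
    have h4 : J 0 ≤ J k := hmono (Nat.zero_le k)
    have h5 : 0 ≤ c - z := by linarith
    have hQ : (J k - J 0) * (J 0 - z) ≤ (Jstar - J 0) * (Jstar - z) :=
      mul_le_mul (by linarith) (by linarith) hd0.le (by linarith)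
    have hP : 0 ≤ τ * (c - z) := mul_nonneg hτ h5
    have h6 := mul_le_mul_of_nonneg_left hQ hP
    nlinarith [mul_le_mul_of_nonneg_right h6 hd0.le]
  linarith
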